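/- Suppose (Θ̃, Γ̃) is a local minimizer of Q₂(λ₁λ₂, ·, ·). Then there exists a local minimizer (Θ̂, Γ̂) of Q₁(λ₁, λ₂, ·, ·) such that θ̂_jl Γ̂_jl^(k) = θ̃_jl Γ̃_jl^(k) for all 1 ≤ j, l ≤ p and 1 ≤ k ≤ K (one may take Θ̂ = λ₁^{-1} Θ̃ and Γ̂ = λ₁ Γ̃). -/

import Mathlib

open scoped BigOperators
open Matrix

noncomputable section

namespace JF

/-- Frobenius norm of a real matrix. -/
def frobG {α β : Type*} [Fintype α] [Fintype β] (B : Matrix α β ℝ) : ℝ :=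
  Real.sqrt (∑ a, ∑ b, B a b ^ 2)

/-- The `(j,l)` block (an `M × M` matrix) of a `pM × pM` matrix. -/
def blk {p M : ℕ} (A : Matrix (Fin p × Fin M) (Fin p × Fin M) ℝ) (j l : Fin p) :
    Matrix (Fin M) (Fin M) ℝ := fun a b => A (j, a) (l, b)

/-- `M`-block version of the ℓ∞ matrix norm: `max_j Σ_l ‖A_{jl}‖_F`. -/
def blockInfty {p M : ℕ} (A : Matrix (Fin p × Fin M) (Fin p × Fin M) ℝ) : ℝ :=
  ⨆ j, ∑ l, frobG (blk A j l)

/-- `M`-block version of the max (elementwise ℓ∞) norm: `max_{j,l} ‖A_{jl}‖_F`. -/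
def blockMax {p M : ℕ} (A : Matrix (Fin p × Fin M) (Fin p × Fin M) ℝ) : ℝ :=
  ⨆ j, ⨆ l, frobG (blk A j l)

/-- `M`-block version of the ℓ₁ matrix norm: `max_l Σ_j ‖A_{jl}‖_F`. -/
def blockOne {p M : ℕ} (A : Matrix (Fin p × Fin M) (Fin p × Fin M) ℝ) : ℝ :=
  ⨆ l, ∑ j, frobG (blk A j l)

/-- Generalized block ℓ∞ norm, with block-rows/columns indexed by an arbitrary
finite type `ι` and blocks of shape `α × α`. -/
def bInftyG {ι α : Type*} [Fintype ι] [Fintype α] (A : Matrix (ι × α) (ι × α) ℝ) : ℝ :=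
  ⨆ j, ∑ l, frobG (fun a b => A (j, a) (l, b))

/-- Entrywise ℓ₁ norm of a matrix. -/
def ell1 {α β : Type*} [Fintype α] [Fintype β] (A : Matrix α β ℝ) : ℝ :=
  ∑ i, ∑ j, |A i j|

/-- `j`-th block of a vector in `ℝ^{pM}`. -/
def vblk {p M : ℕ} (u : Fin p × Fin M → ℝ) (j : Fin p) : Fin M → ℝ := fun a => u (j, a)

/-- Euclidean norm of a vector. -/
def vnorm2 {M : ℕ} (v : Fin M → ℝ) : ℝ := Real.sqrt (∑ a, v a ^ 2)

/-- Block max norm of a vector in `ℝ^{pM}`: `max_j ‖u_j‖_2`. -/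
def vBlockMax {p M : ℕ} (u : Fin p × Fin M → ℝ) : ℝ := ⨆ j, vnorm2 (vblk u j)

/-- `j`-th block of a `pM × M` vertically stacked block matrix. -/
def sblk {p M : ℕ} (x : Matrix (Fin p × Fin M) (Fin M) ℝ) (j : Fin p) :
    Matrix (Fin M) (Fin M) ℝ := fun a b => x (j, a) b

/-- `max_j ‖x_j‖_F` for a `pM × M` stacked block matrix. -/
def stackMax {p M : ℕ} (x : Matrix (Fin p × Fin M) (Fin M) ℝ) : ℝ :=
  ⨆ j, frobG (sblk x j)

/-- `Σ_j ‖x_j‖_F` for a `pM × M` stacked block matrix. -/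
def stackOne {p M : ℕ} (x : Matrix (Fin p × Fin M) (Fin M) ℝ) : ℝ :=
  ∑ j, frobG (sblk x j)

/-- The block matrix `Ω` with blocks `Ω_{jl} = θ_{jl} Γ_{jl}`. -/
def mkOmega {p M : ℕ} (Θ : Matrix (Fin p) (Fin p) ℝ)
    (G : Matrix (Fin p × Fin M) (Fin p × Fin M) ℝ) :
    Matrix (Fin p × Fin M) (Fin p × Fin M) ℝ :=
  fun x y => Θ x.1 y.1 * G x y

/-- Feasible parameters `(Θ, Γ)` for the joint functional graphical model:
`Θ` symmetric with nonnegative off-diagonal and positive diagonal entries,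
each `Γ^{(k)}` block-symmetric (`Γ_{lj} = Γ_{jl}ᵀ`), and every
`Ω^{(k)} = (θ_{jl} Γ^{(k)}_{jl})` symmetric positive definite. -/
def Feasible {p M K : ℕ} (Θ : Matrix (Fin p) (Fin p) ℝ)
    (Γ : Fin K → Matrix (Fin p × Fin M) (Fin p × Fin M) ℝ) : Prop :=
  Θ.IsSymm ∧ (∀ j l : Fin p, j ≠ l → 0 ≤ Θ j l) ∧ (∀ j : Fin p, 0 < Θ j j) ∧
    (∀ (k : Fin K) (j l : Fin p), blk (Γ k) l j = (blk (Γ k) j l)ᵀ) ∧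
    (∀ k : Fin K, (mkOmega Θ (Γ k)).PosDef)

/-- The negative log-likelihood part `Σ_k [tr(Σ̂^{(k)} Ω^{(k)}) − log det Ω^{(k)}]`. -/
def loss {p M K : ℕ}
    (Sig Ω : Fin K → Matrix (Fin p × Fin M) (Fin p × Fin M) ℝ) : ℝ :=
  ∑ k, (Matrix.trace (Sig k * Ω k) - Real.log (Ω k).det)

/-- `Σ_{j≠l} θ_{jl}`. -/
def pen1 {p : ℕ} (Θ : Matrix (Fin p) (Fin p) ℝ) : ℝ :=
  ∑ q ∈ (Finset.univ : Finset (Fin p)).offDiag, Θ q.1 q.2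

/-- `Σ_{j≠l} Σ_k ‖Γ^{(k)}_{jl}‖_F`. -/
def pen2 {p M K : ℕ} (Γ : Fin K → Matrix (Fin p × Fin M) (Fin p × Fin M) ℝ) : ℝ :=
  ∑ q ∈ (Finset.univ : Finset (Fin p)).offDiag, ∑ k, frobG (blk (Γ k) q.1 q.2)

/-- The objective `Q₁(λ₁, λ₂, Θ, Γ)`. -/
def Q1 {p M K : ℕ} (Sig : Fin K → Matrix (Fin p × Fin M) (Fin p × Fin M) ℝ)
    (l1 l2 : ℝ) (Θ : Matrix (Fin p) (Fin p) ℝ)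
    (Γ : Fin K → Matrix (Fin p × Fin M) (Fin p × Fin M) ℝ) : ℝ :=
  loss Sig (fun k => mkOmega Θ (Γ k)) + l1 * pen1 Θ + l2 * pen2 Γ

/-- The objective `Q₂(λ, Θ, Γ)`. -/
def Q2 {p M K : ℕ} (Sig : Fin K → Matrix (Fin p × Fin M) (Fin p × Fin M) ℝ)
    (lam : ℝ) (Θ : Matrix (Fin p) (Fin p) ℝ)
    (Γ : Fin K → Matrix (Fin p × Fin M) (Fin p × Fin M) ℝ) : ℝ :=
  loss Sig (fun k => mkOmega Θ (Γ k)) + pen1 Θ + lam * pen2 Γ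

/-- The objective `Q₃(λ, Ω)`. -/
def Q3 {p M K : ℕ} (Sig : Fin K → Matrix (Fin p × Fin M) (Fin p × Fin M) ℝ)
    (lam : ℝ) (Ω : Fin K → Matrix (Fin p × Fin M) (Fin p × Fin M) ℝ) : ℝ :=
  loss Sig Ω + lam * ∑ q ∈ (Finset.univ : Finset (Fin p)).offDiag,
    Real.sqrt (∑ k, frobG (blk (Ω k) q.1 q.2))

/-- The ℓ₁ distance `‖Θ − Θ'‖₁ + Σ_k ‖Γ^{(k)} − Γ'^{(k)}‖₁` between parameter pairs. -/
def paramDist {p M K : ℕ} (Θ Θ' : Matrix (Fin p) (Fin p) ℝ)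
    (Γ Γ' : Fin K → Matrix (Fin p × Fin M) (Fin p × Fin M) ℝ) : ℝ :=
  ell1 (Θ - Θ') + ∑ k, ell1 (Γ k - Γ' k)

/-- `(Θ̂, Γ̂)` is a local minimizer of `Q₁(λ₁, λ₂, ·, ·)` (parameters restricted to
`θ_{jj} = 1`). -/
def IsLocalMinQ1 {p M K : ℕ}
    (Sig : Fin K → Matrix (Fin p × Fin M) (Fin p × Fin M) ℝ)
    (l1 l2 : ℝ) (Θh : Matrix (Fin p) (Fin p) ℝ)
    (Γh : Fin K → Matrix (Fin p × Fin M) (Fin p × Fin M) ℝ) : Prop :=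
  (Feasible Θh Γh ∧ ∀ j, Θh j j = 1) ∧
    ∃ δ > 0, ∀ Θ Γ, Feasible Θ Γ → (∀ j, Θ j j = 1) →
      paramDist Θ Θh Γ Γh < δ → Q1 Sig l1 l2 Θh Γh ≤ Q1 Sig l1 l2 Θ Γ

/-- `(Θ̂, Γ̂)` is a local minimizer of `Q₂(λ, ·, ·)` over the full parameter space. -/
def IsLocalMinQ2 {p M K : ℕ}
    (Sig : Fin K → Matrix (Fin p × Fin M) (Fin p × Fin M) ℝ)
    (lam : ℝ) (Θh : Matrix (Fin p) (Fin p) ℝ)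
    (Γh : Fin K → Matrix (Fin p × Fin M) (Fin p × Fin M) ℝ) : Prop :=
  Feasible Θh Γh ∧
    ∃ δ > 0, ∀ Θ Γ, Feasible Θ Γ →
      paramDist Θ Θh Γ Γh < δ → Q2 Sig lam Θh Γh ≤ Q2 Sig lam Θ Γ

/-- `Ω̂` is a local minimizer of `Q₃(λ, ·)` over `K`-tuples of symmetric positive
definite matrices. -/
def IsLocalMinQ3 {p M K : ℕ}
    (Sig : Fin K → Matrix (Fin p × Fin M) (Fin p × Fin M) ℝ)
    (lam : ℝ) (Ωh : Fin K → Matrix (Fin p × Fin M) (Fin p × Fin M) ℝ) : Prop :=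
  (∀ k, (Ωh k).PosDef) ∧
    ∃ δ > 0, ∀ Ω : Fin K → Matrix (Fin p × Fin M) (Fin p × Fin M) ℝ,
      (∀ k, (Ω k).PosDef) →
      (∑ k, ell1 (Ω k - Ωh k)) < δ → Q3 Sig lam Ωh ≤ Q3 Sig lam Ω


section Aux

variable {p M K : ℕ}

/-- The candidate `Θ̂`. -/
def ThA (l1 : ℝ) (Θt : Matrix (Fin p) (Fin p) ℝ) : Matrix (Fin p) (Fin p) ℝ :=
  fun j l => if j = l then 1 else Θt j l / l1

/-- The candidate `Γ̂`. -/
def GaA (l1 : ℝ) (Θt : Matrix (Fin p) (Fin p) ℝ)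
    (Γt : Fin K → Matrix (Fin p × Fin M) (Fin p × Fin M) ℝ) :
    Fin K → Matrix (Fin p × Fin M) (Fin p × Fin M) ℝ :=
  fun k x y => if x.1 = y.1 then Θt x.1 x.1 * Γt k x y else l1 * Γt k x y

/-- The reverse map on `Θ`. -/
def ThB (l1 : ℝ) (Θt Θ : Matrix (Fin p) (Fin p) ℝ) : Matrix (Fin p) (Fin p) ℝ :=
  fun j l => if j = l then Θt j j else l1 * Θ j l

/-- The reverse map on `Γ`. -/
def GaB (l1 : ℝ) (Θt : Matrix (Fin p) (Fin p) ℝ)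
    (Γ : Fin K → Matrix (Fin p × Fin M) (Fin p × Fin M) ℝ) :
    Fin K → Matrix (Fin p × Fin M) (Fin p × Fin M) ℝ :=
  fun k x y => if x.1 = y.1 then Γ k x y / Θt x.1 x.1 else Γ k x y / l1

lemma frobG_const_mul {α β : Type*} [Fintype α] [Fintype β] {c : ℝ} (hc : 0 ≤ c)
    (B : Matrix α β ℝ) : frobG (fun a b => c * B a b) = c * frobG B := by
  unfold frobG
  rw [show (∑ a, ∑ b, (c * B a b) ^ 2) = c ^ 2 * ∑ a, ∑ b, (B a b) ^ 2 by
    simp [Finset.mul_sum, mul_pow],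
    Real.sqrt_mul (sq_nonneg c), Real.sqrt_sq hc]

lemma mkOmega_A {l1 : ℝ} (hl1 : l1 ≠ 0)
    (Θt : Matrix (Fin p) (Fin p) ℝ)
    (Γt : Fin K → Matrix (Fin p × Fin M) (Fin p × Fin M) ℝ) (k : Fin K) :
    mkOmega (ThA l1 Θt) (GaA l1 Θt Γt k) = mkOmega Θt (Γt k) := by
  ext x y
  by_cases hxy : x.1 = y.1
  · simp [mkOmega, ThA, GaA, hxy]
  · simp only [mkOmega, ThA, GaA, if_neg hxy]
    field_simp

lemma mkOmega_B {l1 : ℝ} (hl1 : l1 ≠ 0)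
    {Θt Θ : Matrix (Fin p) (Fin p) ℝ} (hT : ∀ j, Θt j j ≠ 0) (hd : ∀ j, Θ j j = 1)
    (Γ : Fin K → Matrix (Fin p × Fin M) (Fin p × Fin M) ℝ) (k : Fin K) :
    mkOmega (ThB l1 Θt Θ) (GaB l1 Θt Γ k) = mkOmega Θ (Γ k) := by
  ext x y
  by_cases hxy : x.1 = y.1
  · simp only [mkOmega, ThB, GaB, if_pos hxy, hxy]
    rw [← hxy, hd x.1]
    simp only [if_true, eq_self_iff_true]
    field_simp [hT x.1]
  · simp only [mkOmega, ThB, GaB, if_neg hxy]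
    field_simp

lemma ell1_le_of {α β : Type*} [Fintype α] [Fintype β] {A B : Matrix α β ℝ} {c : ℝ}
    (h : ∀ i j, |A i j| ≤ c * |B i j|) : ell1 A ≤ c * ell1 B := by
  unfold ell1
  rw [Finset.mul_sum]
  refine Finset.sum_le_sum fun i _ => ?_
  rw [Finset.mul_sum]
  exact Finset.sum_le_sum fun j _ => h i j

lemma abs_div_sub_le {d c x y : ℝ} (hd : 0 < d) (hdc : 1 / d ≤ c) :
    |x / d - y| ≤ c * |x - d * y| := by
  have h1 : x / d - y = (x - d * y) / d := by field_simp
  rw [h1, abs_div, abs_of_pos hd]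
  have h2 : |x - d * y| / d = (1 / d) * |x - d * y| := by ring
  rw [h2]
  exact mul_le_mul_of_nonneg_right hdc (abs_nonneg _)

end Aux

/-- Lemma 1, converse direction. If `(Θ̃, Γ̃)` is a local minimizer of
`Q₂(λ₁λ₂, ·, ·)`, then there is a local minimizer `(Θ̂, Γ̂)` of `Q₁(λ₁, λ₂, ·, ·)`
with `θ̂_{jl} Γ̂^{(k)}_{jl} = θ̃_{jl} Γ̃^{(k)}_{jl}` for all `j, l, k`. -/
theorem statement_3 {p M K : ℕ} (hp : 2 ≤ p) (hM : 1 ≤ M) (hK : 1 ≤ K)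
    (l1 l2 : ℝ) (hl1 : 0 < l1) (hl2 : 0 < l2)
    (Sig : Fin K → Matrix (Fin p × Fin M) (Fin p × Fin M) ℝ)
    (hSig : ∀ k, (Sig k).IsSymm)
    (Θt : Matrix (Fin p) (Fin p) ℝ)
    (Γt : Fin K → Matrix (Fin p × Fin M) (Fin p × Fin M) ℝ)
    (h : IsLocalMinQ2 Sig (l1 * l2) Θt Γt) :
    ∃ (Θh : Matrix (Fin p) (Fin p) ℝ)
      (Γh : Fin K → Matrix (Fin p × Fin M) (Fin p × Fin M) ℝ),
      IsLocalMinQ1 Sig l1 l2 Θh Γh ∧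
        ∀ k, mkOmega Θh (Γh k) = mkOmega Θt (Γt k) := by
  obtain ⟨hfT, δ, hδpos, hmin⟩ := h
  obtain ⟨hTsym, hToff, hTdiag, hGsym, hPD⟩ := hfT
  have hl1ne : l1 ≠ 0 := ne_of_gt hl1
  have hTne : ∀ j, Θt j j ≠ 0 := fun j => ne_of_gt (hTdiag j)
  haveI : Nonempty (Fin p) := ⟨⟨0, by omega⟩⟩
  have hTsym' : ∀ a b, Θt a b = Θt b a := fun a b => by
    conv_lhs => rw [← hTsym]
    rfl
  -- the constant c
  set c : ℝ := l1 + 1 / l1 + ∑ j, 1 / Θt j j with hc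
  have hsum_pos : 0 < ∑ j : Fin p, 1 / Θt j j :=
    Finset.sum_pos (fun j _ => one_div_pos.mpr (hTdiag j)) Finset.univ_nonempty
  have hinv_pos : 0 < 1 / l1 := by positivity
  have hc_l1 : l1 ≤ c := by rw [hc]; linarith
  have hc_inv : 1 / l1 ≤ c := by rw [hc]; linarith
  have hc_j : ∀ j, 1 / Θt j j ≤ c := by
    intro j
    have h1 := Finset.single_le_sum (f := fun j : Fin p => 1 / Θt j j)
      (fun i _ => (one_div_pos.mpr (hTdiag i)).le) (Finset.mem_univ j)
    rw [hc]; linarith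
  have hc_pos : 0 < c := lt_of_lt_of_le hl1 hc_l1
  -- Q1 at the candidate equals Q2 at the original
  have key1 : Q1 Sig l1 l2 (ThA l1 Θt) (GaA l1 Θt Γt) = Q2 Sig (l1 * l2) Θt Γt := by
    unfold Q1 Q2
    have hloss : (fun k => mkOmega (ThA l1 Θt) (GaA l1 Θt Γt k))
        = fun k => mkOmega Θt (Γt k) := funext fun k => mkOmega_A hl1ne Θt Γt k
    rw [hloss]
    have hp1 : l1 * pen1 (ThA l1 Θt) = pen1 Θt := by
      unfold pen1
      rw [Finset.mul_sum]
      refine Finset.sum_congr rfl fun q hq => ?_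
      obtain ⟨-, -, hne⟩ := Finset.mem_offDiag.mp hq
      rw [ThA, if_neg hne]
      field_simp
    have hp2 : pen2 (GaA l1 Θt Γt) = l1 * pen2 Γt := by
      unfold pen2
      rw [Finset.mul_sum]
      refine Finset.sum_congr rfl fun q hq => ?_
      rw [Finset.mul_sum]
      refine Finset.sum_congr rfl fun k _ => ?_
      obtain ⟨-, -, hne⟩ := Finset.mem_offDiag.mp hq
      have hb : blk (GaA l1 Θt Γt k) q.1 q.2
          = fun a b => l1 * blk (Γt k) q.1 q.2 a b := by
        funext a b; simp [blk, GaA, hne]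
      rw [hb, frobG_const_mul hl1.le]
    rw [hp2, ← hp1]
    ring
  -- feasibility of the candidate
  have hfeasA : Feasible (ThA l1 Θt) (GaA l1 Θt Γt) := by
    refine ⟨?_, ?_, ?_, ?_, ?_⟩
    · show (ThA l1 Θt)ᵀ = ThA l1 Θt
      ext j l
      simp only [transpose_apply, ThA]
      by_cases hjl : j = l
      · subst hjl; simp
      · rw [if_neg (fun hh => hjl hh.symm), if_neg hjl, hTsym' l j]
    · intro j l hne
      rw [ThA, if_neg hne]
      exact div_nonneg (hToff j l hne) hl1.le
    · intro j; simp [ThA]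
    · intro k j l
      have hG : ∀ a b, Γt k (l, a) (j, b) = Γt k (j, b) (l, a) := fun a b => by
        have := congrFun (congrFun (hGsym k j l) a) b
        simpa [blk, transpose_apply] using this
      funext a b
      simp only [blk, transpose_apply, GaA]
      by_cases hjl : j = l
      · subst hjl; simp [hG a b]
      · rw [if_neg (fun hh : l = j => hjl hh.symm), if_neg hjl, hG a b]
    · intro k
      rw [mkOmega_A hl1ne Θt Γt k]
      exact hPD k
  refine ⟨ThA l1 Θt, GaA l1 Θt Γt,
    ⟨⟨hfeasA, fun j => by simp [ThA]⟩, δ / c, div_pos hδpos hc_pos, ?_⟩,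
    fun k => mkOmega_A hl1ne Θt Γt k⟩
  intro Θ Γ hfeas hdiag hdist
  obtain ⟨hsym, hoff, hdiagpos, hGsym2, hPD2⟩ := hfeas
  have hsym' : ∀ a b, Θ a b = Θ b a := fun a b => by
    conv_lhs => rw [← hsym]
    rfl
  -- Q2 at the reverse point equals Q1 at (Θ, Γ)
  have key2 : Q2 Sig (l1 * l2) (ThB l1 Θt Θ) (GaB l1 Θt Γ) = Q1 Sig l1 l2 Θ Γ := by
    unfold Q1 Q2
    have hloss : (fun k => mkOmega (ThB l1 Θt Θ) (GaB l1 Θt Γ k))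
        = fun k => mkOmega Θ (Γ k) := funext fun k => mkOmega_B hl1ne hTne hdiag Γ k
    rw [hloss]
    have hp1 : pen1 (ThB l1 Θt Θ) = l1 * pen1 Θ := by
      unfold pen1
      rw [Finset.mul_sum]
      refine Finset.sum_congr rfl fun q hq => ?_
      obtain ⟨-, -, hne⟩ := Finset.mem_offDiag.mp hq
      rw [ThB, if_neg hne]
    have hp2 : pen2 (GaB l1 Θt Γ) = (1 / l1) * pen2 Γ := by
      unfold pen2
      rw [Finset.mul_sum]
      refine Finset.sum_congr rfl fun q hq => ?_
      rw [Finset.mul_sum]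
      refine Finset.sum_congr rfl fun k _ => ?_
      obtain ⟨-, -, hne⟩ := Finset.mem_offDiag.mp hq
      have hb : blk (GaB l1 Θt Γ k) q.1 q.2
          = fun a b => (1 / l1) * blk (Γ k) q.1 q.2 a b := by
        funext a b
        simp only [blk, GaB, if_neg hne]
        ring
      rw [hb, frobG_const_mul hinv_pos.le]
    rw [hp1, hp2]
    have : l1 * l2 * ((1 / l1) * pen2 Γ) = l2 * pen2 Γ := by
      field_simp
    rw [this]
  -- feasibility of the reverse point
  have hfeasB : Feasible (ThB l1 Θt Θ) (GaB l1 Θt Γ) := by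
    refine ⟨?_, ?_, ?_, ?_, ?_⟩
    · show (ThB l1 Θt Θ)ᵀ = ThB l1 Θt Θ
      ext j l
      simp only [transpose_apply, ThB]
      by_cases hjl : j = l
      · subst hjl; simp
      · rw [if_neg (fun hh => hjl hh.symm), if_neg hjl, hsym' l j]
    · intro j l hne
      rw [ThB, if_neg hne]
      exact mul_nonneg hl1.le (hoff j l hne)
    · intro j; simpa [ThB] using hTdiag j
    · intro k j l
      have hG : ∀ a b, Γ k (l, a) (j, b) = Γ k (j, b) (l, a) := fun a b => by
        have := congrFun (congrFun (hGsym2 k j l) a) b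
        simpa [blk, transpose_apply] using this
      funext a b
      simp only [blk, transpose_apply, GaB]
      by_cases hjl : j = l
      · subst hjl; simp [hG a b]
      · rw [if_neg (fun hh : l = j => hjl hh.symm), if_neg hjl, hG a b]
    · intro k
      rw [mkOmega_B hl1ne hTne hdiag Γ k]
      exact hPD2 k
  -- distance bound
  have b1 : ell1 (ThB l1 Θt Θ - Θt) ≤ c * ell1 (Θ - ThA l1 Θt) := by
    refine ell1_le_of fun j l => ?_
    by_cases hjl : j = l
    · subst hjl
      simp [Matrix.sub_apply, ThB, ThA, hdiag j]
    · rw [Matrix.sub_apply, Matrix.sub_apply, ThB, ThA, if_neg hjl, if_neg hjl]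
      have h1 : l1 * Θ j l - Θt j l = l1 * (Θ j l - Θt j l / l1) := by
        field_simp
      rw [h1, abs_mul, abs_of_pos hl1]
      exact mul_le_mul_of_nonneg_right hc_l1 (abs_nonneg _)
  have b2 : ∀ k, ell1 (GaB l1 Θt Γ k - Γt k) ≤ c * ell1 (Γ k - GaA l1 Θt Γt k) := by
    intro k
    refine ell1_le_of fun x y => ?_
    by_cases hxy : x.1 = y.1
    · rw [Matrix.sub_apply, Matrix.sub_apply, GaB, GaA, if_pos hxy, if_pos hxy]
      exact abs_div_sub_le (hTdiag x.1) (hc_j x.1)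
    · rw [Matrix.sub_apply, Matrix.sub_apply, GaB, GaA, if_neg hxy, if_neg hxy]
      exact abs_div_sub_le hl1 hc_inv
  have hdistB : paramDist (ThB l1 Θt Θ) Θt (GaB l1 Θt Γ) Γt < δ := by
    have hle : paramDist (ThB l1 Θt Θ) Θt (GaB l1 Θt Γ) Γt
        ≤ c * paramDist Θ (ThA l1 Θt) Γ (GaA l1 Θt Γt) := by
      unfold paramDist
      rw [mul_add, Finset.mul_sum]
      exact add_le_add b1 (Finset.sum_le_sum fun k _ => b2 k)
    calc paramDist (ThB l1 Θt Θ) Θt (GaB l1 Θt Γ) Γt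
        ≤ c * paramDist Θ (ThA l1 Θt) Γ (GaA l1 Θt Γt) := hle
      _ < c * (δ / c) := by exact mul_lt_mul_of_pos_left hdist hc_pos
      _ = δ := by field_simp
  rw [key1, ← key2]
  exact hmin _ _ hfeasB hdistB
end JF
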